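/- Let T, S : H₁ → H₂ be bounded linear operators between Hilbert spaces, α > 0, and let B ∈ H₁, g = TB. Let B_α = (T*T + αI)⁻¹T*g and B̃_α = (S*S + αI)⁻¹S*g̃ for some g̃ ∈ H₂. Then ‖B_α − B̃_α‖ ≤ (‖T − S‖/√α)‖B‖ + ‖g − g̃‖/(2√α). -/

import Mathlib

open ContinuousLinearMap

open scoped RealInnerProductSpace

set_option maxHeartbeats 1000000 in
/-- Tikhonov perturbation bound: if `g = TB`, `Bα = (T*T+αI)⁻¹T*g` and
`B̃α = (S*S+αI)⁻¹S*g̃` (characterized by the normal equations), then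
`‖Bα − B̃α‖ ≤ (‖T−S‖/√α)‖B‖ + ‖g−g̃‖/(2√α)`. -/
theorem stmt11 {H₁ H₂ : Type*}
    [NormedAddCommGroup H₁] [InnerProductSpace ℝ H₁] [CompleteSpace H₁]
    [NormedAddCommGroup H₂] [InnerProductSpace ℝ H₂] [CompleteSpace H₂]
    (T S : H₁ →L[ℝ] H₂) (α : ℝ) (hα : 0 < α)
    (B Bα Btα : H₁) (g gt : H₂) (hg : g = T B)
    (hBα : (adjoint T) (T Bα) + α • Bα = (adjoint T) g)
    (hBtα : (adjoint S) (S Btα) + α • Btα = (adjoint S) gt) :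
    ‖Bα - Btα‖ ≤ ‖T - S‖ / Real.sqrt α * ‖B‖ + ‖g - gt‖ / (2 * Real.sqrt α) := by
  set r := Real.sqrt α with hr
  have hr0 : 0 < r := Real.sqrt_pos.mpr hα
  have hr2 : r ^ 2 = α := Real.sq_sqrt hα.le
  set E := B - Bα with hE
  set D := Btα - Bα with hD
  have hBαE : Bα = B - E := by rw [hE]; abel
  -- Step 1 : α • Bα = T* (T E)
  have step1 : α • Bα = (adjoint T) (T E) := by
    rw [hE, map_sub, map_sub, ← hg]
    exact eq_sub_of_add_eq' hBα
  -- Step 2 : α ⟪B, E⟫ = ‖T E‖² + α ‖E‖²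
  have key2 : α * ⟪B, E⟫ = ‖T E‖ ^ 2 + α * ‖E‖ ^ 2 := by
    have h1 : ⟪α • Bα, E⟫ = ‖T E‖ ^ 2 := by
      rw [step1, ContinuousLinearMap.adjoint_inner_left, real_inner_self_eq_norm_sq]
    rw [hBαE, smul_sub, inner_sub_left, real_inner_smul_left, real_inner_smul_left,
      real_inner_self_eq_norm_sq] at h1
    linarith
  have hBE : ⟪B, E⟫ ≤ ‖B‖ * ‖E‖ := real_inner_le_norm B E
  have hEB : ‖E‖ ≤ ‖B‖ := by
    have h1 : α * ‖E‖ ^ 2 ≤ α * (‖B‖ * ‖E‖) := by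
      nlinarith [sq_nonneg (‖T E‖), mul_le_mul_of_nonneg_left hBE hα.le]
    have h2 : ‖E‖ ^ 2 ≤ ‖B‖ * ‖E‖ := le_of_mul_le_mul_left (by linarith) hα
    rcases eq_or_lt_of_le (norm_nonneg E) with h0 | h0
    · rw [← h0]; exact norm_nonneg B
    · have h3 : ‖E‖ * ‖E‖ ≤ ‖B‖ * ‖E‖ := by nlinarith
      exact le_of_mul_le_mul_right h3 h0
  have hTE : ‖T E‖ ≤ r * ‖B‖ / 2 := by
    have h1 : ‖T E‖ ^ 2 ≤ α * ‖B‖ ^ 2 / 4 := by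
      nlinarith [mul_nonneg hα.le (sq_nonneg (‖B‖ - 2 * ‖E‖)), norm_nonneg E]
    nlinarith [norm_nonneg (T E), norm_nonneg B, mul_nonneg hr0.le (norm_nonneg B)]
  -- ‖Bα‖ ≤ ‖B‖
  have hEBα : 0 ≤ ⟪E, Bα⟫ := by
    have h1 : ⟪E, α • Bα⟫ = ‖T E‖ ^ 2 := by
      rw [step1, ContinuousLinearMap.adjoint_inner_right, real_inner_self_eq_norm_sq]
    rw [real_inner_smul_right] at h1
    nlinarith [sq_nonneg (‖T E‖)]
  have hBαB : ‖Bα‖ ≤ ‖B‖ := by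
    have h1 : ‖Bα‖ ^ 2 = ⟪B, Bα⟫ - ⟪E, Bα⟫ := by
      rw [← real_inner_self_eq_norm_sq, hBαE, inner_sub_left]
    have h2 : ⟪B, Bα⟫ ≤ ‖B‖ * ‖Bα‖ := real_inner_le_norm B Bα
    nlinarith [norm_nonneg Bα, norm_nonneg B, mul_self_nonneg (‖Bα‖ - ‖B‖)]
  -- Step 3 : key identity
  set u := (gt - g) + (T - S) Bα with hu
  have step3 : (adjoint S) (S D) + α • D
      = (adjoint S) u + (adjoint S) (T E) - (adjoint T) (T E) := by
    have hBsum : B = Bα + E := by rw [hE]; abel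
    have hSg : (adjoint S) g = (adjoint S) (T Bα) + (adjoint S) (T E) := by
      rw [hg, hBsum, map_add, map_add]
    rw [hu, hD]
    simp only [map_sub, map_add, ContinuousLinearMap.sub_apply, smul_sub]
    rw [eq_sub_of_add_eq hBtα, step1, hSg]
    abel
  -- Step 4 : inner product with D
  have step4 : ‖S D‖ ^ 2 + α * ‖D‖ ^ 2 = ⟪u, S D⟫ + ⟪T E, S D - T D⟫ := by
    have h := congrArg (fun x => ⟪x, D⟫) step3
    simp only [inner_add_left, inner_sub_left, real_inner_smul_left,
      ContinuousLinearMap.adjoint_inner_left, real_inner_self_eq_norm_sq] at h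
    rw [inner_sub_right]
    linarith
  -- bounds
  have huSD : ⟪u, S D⟫ ≤ ‖u‖ * ‖S D‖ := real_inner_le_norm u (S D)
  have hSTD : ‖S D - T D‖ ≤ ‖T - S‖ * ‖D‖ := by
    have h1 : S D - T D = -((T - S) D) := by
      simp [ContinuousLinearMap.sub_apply]
    rw [h1, norm_neg]
    exact (T - S).le_opNorm D
  have hwD : ⟪T E, S D - T D⟫ ≤ ‖T E‖ * (‖T - S‖ * ‖D‖) := by
    calc ⟪T E, S D - T D⟫ ≤ ‖T E‖ * ‖S D - T D‖ := real_inner_le_norm _ _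
      _ ≤ ‖T E‖ * (‖T - S‖ * ‖D‖) := by
          exact mul_le_mul_of_nonneg_left hSTD (norm_nonneg _)
  have hun : ‖u‖ ≤ ‖g - gt‖ + ‖T - S‖ * ‖B‖ := by
    calc ‖u‖ ≤ ‖gt - g‖ + ‖(T - S) Bα‖ := norm_add_le _ _
      _ ≤ ‖g - gt‖ + ‖T - S‖ * ‖B‖ := by
          rw [norm_sub_rev]
          gcongr
          calc ‖(T - S) Bα‖ ≤ ‖T - S‖ * ‖Bα‖ := (T - S).le_opNorm Bα
            _ ≤ ‖T - S‖ * ‖B‖ := by gcongr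
  -- quadratic inequality
  set t := ‖D‖ with ht
  set s := ‖S D‖ with hs
  set a := ‖u‖ with ha
  set b := ‖T E‖ * ‖T - S‖ with hb
  have hquad : s ^ 2 + α * t ^ 2 ≤ a * s + b * t := by
    have hassoc : ‖T E‖ * (‖T - S‖ * t) = b * t := by rw [hb]; ring
    linarith [huSD, hwD, step4, hassoc.le, hassoc.ge]
  have hq : α * t ^ 2 ≤ b * t + a ^ 2 / 4 := by
    nlinarith [sq_nonneg (2 * s - a)]
  have ha0 : 0 ≤ a := norm_nonneg u
  have hb0 : 0 ≤ b := mul_nonneg (norm_nonneg _) (norm_nonneg _)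
  have ht0 : 0 ≤ t := norm_nonneg D
  have htb : α * t ≤ b + a * r / 2 := by
    by_contra hcon
    push_neg at hcon
    have h1 : a < 2 * r * t := by
      nlinarith [hb0, hr0, hr2, mul_pos hr0 hr0]
    nlinarith [hq, ht0, ha0, hr0.le, mul_nonneg ha0 ht0, mul_nonneg ht0 hr0.le,
      mul_nonneg ha0 hr0.le]
  -- finish
  have hnorm : ‖Bα - Btα‖ = t := by rw [ht, hD, norm_sub_rev]
  rw [hnorm]
  have hTSnn : (0:ℝ) ≤ ‖T - S‖ := norm_nonneg _
  have hBnn : (0:ℝ) ≤ ‖B‖ := norm_nonneg _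
  have hbb : b ≤ r * ‖B‖ / 2 * ‖T - S‖ := by
    rw [hb]; exact mul_le_mul_of_nonneg_right hTE hTSnn
  have hgoal : t ≤ ‖T - S‖ / r * ‖B‖ + ‖g - gt‖ / (2 * r) := by
    have h1 : t ≤ (b + a * r / 2) / α := by
      rw [le_div_iff₀ hα]; linarith [htb]
    have h2 : (b + a * r / 2) / α ≤ ‖T - S‖ / r * ‖B‖ + ‖g - gt‖ / (2 * r) := by
      rw [div_le_iff₀ hα, ← hr2]
      have hrr : (‖T - S‖ / r * ‖B‖ + ‖g - gt‖ / (2 * r)) * r ^ 2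
          = ‖T - S‖ * ‖B‖ * r + ‖g - gt‖ * r / 2 := by
        field_simp
      rw [hrr]
      have h3 := mul_le_mul_of_nonneg_right hun hr0.le
      nlinarith [mul_nonneg (mul_nonneg hTSnn hBnn) hr0.le]
    linarith
  exact hgoal
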